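/- If L and M are bi-embeddable linear orders and L is indecomposable, then M is also indecomposable. -/

import Mathlib

/-- A linear order `L` is indecomposable if for every downward-closed subset `S` of `L`,
`L` order-embeds into the suborder `S` or into the suborder on the complement of `S`. -/
def Indecomposable (L : Type*) [LinearOrder L] : Prop :=
  ∀ S : Set L, (∀ x y : L, x ≤ y → y ∈ S → x ∈ S) →
    Nonempty (L ↪o ↥S) ∨ Nonempty (L ↪o ↥(Sᶜ))

/-- Restrict an order embedding to subsets it maps into. -/
def OrderEmbedding.restrictSet {L M : Type*} [LinearOrder L] [LinearOrder M]
    (f : L ↪o M) (T : Set L) (S : Set M) (h : ∀ x ∈ T, f x ∈ S) : ↥T ↪o ↥S where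
  toFun x := ⟨f x, h x x.2⟩
  inj' x y hxy := Subtype.ext (f.injective (congrArg Subtype.val hxy))
  map_rel_iff' := by intro a b; exact f.le_iff_le

/-- If `L` and `M` are bi-embeddable linear orders and `L` is indecomposable,
then `M` is also indecomposable. -/
theorem indecomposable_of_biEmbeddable {L M : Type*} [LinearOrder L] [LinearOrder M]
    (hLM : Nonempty (L ↪o M)) (hML : Nonempty (M ↪o L))
    (hL : Indecomposable L) : Indecomposable M := by
  obtain ⟨f⟩ := hLM
  obtain ⟨g⟩ := hML
  intro S hS
  set T : Set L := f ⁻¹' S with hT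
  have hTdc : ∀ x y : L, x ≤ y → y ∈ T → x ∈ T := fun x y hxy hy =>
    hS (f x) (f y) (f.monotone hxy) hy
  rcases hL T hTdc  with e | ⟨e⟩
  · exact Or.inl ⟨(g.trans e.some).trans (f.restrictSet T S (fun x hx => hx))⟩
  · exact Or.inr ⟨(g.trans e.some).trans (f.restrictSet Tᶜ Sᶜ (fun x hx => hx))⟩
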